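/- Let g(x) = (1-4x)^(-1/2) and C(x) = 2/(1+sqrt(1-4x)). For every real ℓ and nonnegative integer n, the n-th derivative of g*C^ℓ divided by n! equals the sum over i from 0 to n of binomial(2n-i, n-i)*binomial(ℓ+i-1, i)*g^(1+2n-i)*C^(ℓ+i). -/

import Mathlib

open Real Finset

/-- Generalized binomial coefficient with real upper argument. -/
noncomputable def rchoose (x : ℝ) (k : ℕ) : ℝ :=
  (∏ j ∈ Finset.range k, (x - j)) / (Nat.factorial k : ℝ)

noncomputable def Gf (y : ℝ) : ℝ := (1 - 4 * y) ^ (-(1 / 2) : ℝ)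
noncomputable def Cf (y : ℝ) : ℝ := 2 / (1 + Real.sqrt (1 - 4 * y))

variable {x : ℝ}

lemma t_pos (hx : x < 1 / 4) : 0 < 1 - 4 * x := by linarith

lemma Gf_pos (hx : x < 1 / 4) : 0 < Gf x := Real.rpow_pos_of_pos (t_pos hx) _

lemma s_pos (hx : x < 1 / 4) : 0 < Real.sqrt (1 - 4 * x) := Real.sqrt_pos.2 (t_pos hx)

lemma Cf_pos (hx : x < 1 / 4) : 0 < Cf x := by
  have := s_pos hx
  unfold Cf
  positivity

lemma Gf_eq (hx : x < 1 / 4) : Gf x = (Real.sqrt (1 - 4 * x))⁻¹ := by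
  rw [Gf, Real.rpow_neg (t_pos hx).le, Real.sqrt_eq_rpow]

lemma hasDerivAt_Gf_rpow (α : ℝ) (hx : x < 1 / 4) :
    HasDerivAt (fun y => Gf y ^ α) (2 * α * Gf x ^ (α + 2)) x := by
  have ht := t_pos hx
  have h1 : HasDerivAt (fun y : ℝ => 1 - 4 * y) (-4) x := by
    simpa using ((hasDerivAt_id x).const_mul (4:ℝ)).const_sub 1
  have h2 : HasDerivAt Gf ((-4) * (-(1/2)) * (1 - 4*x) ^ ((-(1/2) : ℝ) - 1)) x :=
    h1.rpow_const (Or.inl ht.ne')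
  have h3 : HasDerivAt (fun y => Gf y ^ α)
      ((-4) * (-(1/2)) * (1 - 4*x) ^ ((-(1/2) : ℝ) - 1) * α * Gf x ^ (α - 1)) x :=
    h2.rpow_const (Or.inl (Gf_pos hx).ne')
  convert h3 using 1
  rw [Gf, ← Real.rpow_mul ht.le, ← Real.rpow_mul ht.le,
    show (-4:ℝ)*(-(1/2))*(1-4*x)^((-(1/2):ℝ)-1)*α*(1-4*x)^(-(1/2)*(α-1)) =
      2*α*((1-4*x)^((-(1/2):ℝ)-1)*(1-4*x)^(-(1/2)*(α-1))) by ring,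
    ← Real.rpow_add ht]
  congr 1
  ring

lemma hasDerivAt_Cf (hx : x < 1 / 4) :
    HasDerivAt Cf (Gf x * Cf x ^ (2:ℝ)) x := by
  have ht := t_pos hx
  have hs := s_pos hx
  have h1 : HasDerivAt (fun y : ℝ => 1 - 4 * y) (-4) x := by
    simpa using ((hasDerivAt_id x).const_mul (4:ℝ)).const_sub 1
  have h2 : HasDerivAt (fun y => Real.sqrt (1 - 4 * y))
      ((-4) / (2 * Real.sqrt (1 - 4 * x))) x := h1.sqrt ht.ne'
  have h3 : HasDerivAt (fun y => 1 + Real.sqrt (1 - 4 * y))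
      ((-4) / (2 * Real.sqrt (1 - 4 * x))) x := h2.const_add 1
  have hs1 : (0:ℝ) < 1 + Real.sqrt (1 - 4 * x) := by linarith
  have h4 : HasDerivAt Cf
      (-(2 * ((-4) / (2 * Real.sqrt (1 - 4 * x)))) / (1 + Real.sqrt (1 - 4*x)) ^ 2) x := by
    exact ((hasDerivAt_const x (2:ℝ)).fun_div h3 hs1.ne').congr_deriv (by ring)
  convert h4 using 1
  rw [Gf_eq hx, Cf, div_rpow (by norm_num) hs1.le,
    show ((2:ℝ)^(2:ℝ)) = 4 by
      rw [show ((2:ℝ):ℝ) ^ (2:ℝ) = (2:ℝ) ^ ((2:ℕ):ℝ) by norm_num, Real.rpow_natCast]; norm_num,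
    show ((1 + Real.sqrt (1-4*x)) ^ ((2:ℝ))) = (1 + Real.sqrt (1-4*x)) ^ (2:ℕ) by
      rw [← Real.rpow_natCast]; norm_num]
  field_simp

lemma hasDerivAt_Cf_rpow (β : ℝ) (hx : x < 1 / 4) :
    HasDerivAt (fun y => Cf y ^ β) (β * Gf x * Cf x ^ (β + 1)) x := by
  have h3 : HasDerivAt (fun y => Cf y ^ β)
      (Gf x * Cf x ^ (2:ℝ) * β * Cf x ^ (β - 1)) x :=
    (hasDerivAt_Cf hx).rpow_const (Or.inl (Cf_pos hx).ne')
  convert h3 using 1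
  rw [show Gf x * Cf x ^ (2:ℝ) * β * Cf x ^ (β-1) = β * Gf x * (Cf x ^ (2:ℝ) * Cf x ^ (β-1)) by ring,
    ← Real.rpow_add (Cf_pos hx)]
  congr 2
  ring

lemma hasDerivAt_term (a α β : ℝ) (hx : x < 1/4) :
    HasDerivAt (fun y => a * Gf y ^ α * Cf y ^ β)
      (a * (2*α * Gf x^(α+2) * Cf x^β + β * Gf x^(α+1) * Cf x^(β+1))) x := by
  have h := ((hasDerivAt_Gf_rpow α hx).fun_mul (hasDerivAt_Cf_rpow β hx)).const_mul a
  have hfun : (fun y => a * Gf y ^ α * Cf y ^ β) = (fun y => a * (Gf y ^ α * Cf y ^ β)) := by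
    funext y; ring
  rw [hfun]
  refine h.congr_deriv ?_
  rw [Real.rpow_add_one (Gf_pos hx).ne' α]
  ring

lemma rchoose_zero (x : ℝ) : rchoose x 0 = 1 := by simp [rchoose]

lemma rchoose_succ (x : ℝ) (k : ℕ) :
    (k + 1 : ℝ) * rchoose x (k + 1) = x * rchoose (x - 1) k := by
  have h : ∏ j ∈ Finset.range (k+1), (x - (j:ℝ)) =
      (∏ j ∈ Finset.range k, (x - 1 - (j:ℝ))) * x := by
    rw [Finset.prod_range_succ' (fun j => x - (j:ℝ)) k]
    push_cast
    congr 1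
    · exact Finset.prod_congr rfl fun j _ => by ring
    · norm_num
  rw [rchoose, rchoose, h, Nat.factorial_succ]
  have h1 : ((k+1).factorial : ℝ) ≠ 0 := Nat.cast_ne_zero.2 (Nat.factorial_ne_zero _)
  have h2 : (k.factorial : ℝ) ≠ 0 := Nat.cast_ne_zero.2 (Nat.factorial_ne_zero _)
  rw [Nat.factorial_succ] at h1
  push_cast at h1 ⊢
  field_simp

lemma nat_id (i k : ℕ) :
    (i+k+1) * Nat.choose (i+2*k+2) (k+1)
      = 2*(i+2*k+1) * Nat.choose (i+2*k) k + i * Nat.choose (i+2*k+1) (k+1) := by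
  have h1 : (k+1) ≤ i+2*k+2 := by omega
  have h2 : k ≤ i+2*k := by omega
  have h3 : (k+1) ≤ i+2*k+1 := by omega
  have e1 : i+2*k+2 - (k+1) = i+k+1 := by omega
  have e2 : i+2*k - k = i+k := by omega
  have e3 : i+2*k+1 - (k+1) = i+k := by omega
  have : ((i+k+1) * Nat.choose (i+2*k+2) (k+1) : ℚ)
      = (2*(i+2*k+1) * Nat.choose (i+2*k) k + i * Nat.choose (i+2*k+1) (k+1) : ℚ) := by
    rw [Nat.cast_choose ℚ h1, Nat.cast_choose ℚ h2, Nat.cast_choose ℚ h3, e1, e2, e3]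
    have f1 : ((i+2*k+2).factorial : ℚ) = (i+2*k+2) * ((i+2*k+1) * (i+2*k).factorial) := by
      rw [show i+2*k+2 = (i+2*k+1)+1 by omega, Nat.factorial_succ, Nat.factorial_succ]; push_cast; ring
    have f2 : ((i+2*k+1).factorial : ℚ) = (i+2*k+1) * (i+2*k).factorial := by
      rw [Nat.factorial_succ]; push_cast; ring
    have f3 : ((i+k+1).factorial : ℚ) = (i+k+1) * (i+k).factorial := by
      rw [show i+k+1 = (i+k)+1 by omega, Nat.factorial_succ]; push_cast; ring
    have f4 : ((k+1).factorial : ℚ) = (k+1) * k.factorial := by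
      rw [Nat.factorial_succ]; push_cast; ring
    have n1 : ((i+2*k).factorial : ℚ) ≠ 0 := Nat.cast_ne_zero.2 (Nat.factorial_ne_zero _)
    have n2 : ((i+k).factorial : ℚ) ≠ 0 := Nat.cast_ne_zero.2 (Nat.factorial_ne_zero _)
    have n3 : ((k).factorial : ℚ) ≠ 0 := Nat.cast_ne_zero.2 (Nat.factorial_ne_zero _)
    rw [f1, f2, f3, f4]
    push_cast
    field_simp
    ring
  exact_mod_cast this

lemma coeff_id (ℓ : ℝ) (n j : ℕ) (hj : j ≤ n + 1) :
    ((n:ℝ)+1) * (Nat.choose (2*(n+1)-j) (n+1-j) : ℝ) * rchoose (ℓ+j-1) j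
      = (if j ≤ n then 2*((1:ℝ)+2*n-j) * (Nat.choose (2*n-j) (n-j) : ℝ) * rchoose (ℓ+j-1) j else 0)
      + (if j = 0 then 0
          else (ℓ+((j-1:ℕ):ℝ)) * (Nat.choose (2*n-(j-1)) (n-(j-1)) : ℝ)
            * rchoose (ℓ+((j-1:ℕ):ℝ)-1) (j-1)) := by
  cases j with
  | zero =>
      simp only [Nat.le_zero, if_pos (Nat.zero_le n), if_pos rfl, Nat.sub_zero, Nat.cast_zero]
      rw [show 2*(n+1) = 2*n+2 from by omega]
      have h := nat_id 0 n
      simp only [Nat.zero_add, zero_add, zero_mul, add_zero, Nat.zero_mul] at h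
      have h' : ((n+1 : ℕ) : ℝ) * (Nat.choose (2*n+2) (n+1) : ℝ)
          = 2*((2*n+1 : ℕ) : ℝ) * (Nat.choose (2*n) n : ℝ) := by exact_mod_cast h
      push_cast at h' ⊢
      linear_combination (rchoose (ℓ + 0 - 1) 0) * h'
  | succ m =>
      have harg : ℓ + ((m+1:ℕ):ℝ) - 1 = ℓ + (m:ℝ) := by push_cast; ring
      have hm1 : (m+1) - 1 = m := rfl
      have hrc := rchoose_succ (ℓ + (m:ℝ)) m
      simp only [hm1, if_neg (Nat.succ_ne_zero m)]
      by_cases hmn : m + 1 ≤ n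
      · rw [if_pos hmn]
        obtain ⟨k, rfl⟩ := Nat.exists_eq_add_of_le hmn
        have c1 : 2*(m+1+k+1)-(m+1) = m+2*k+3 := by omega
        have c2 : (m+1+k+1)-(m+1) = k+1 := by omega
        have c3 : 2*(m+1+k)-(m+1) = m+2*k+1 := by omega
        have c4 : (m+1+k)-(m+1) = k := by omega
        have c5 : 2*(m+1+k)-m = m+2*k+2 := by omega
        have c6 : (m+1+k)-m = k+1 := by omega
        rw [c1, c2, c3, c4, c5, c6, harg]
        have h := nat_id (m+1) k
        rw [show m+1+2*k+2 = m+2*k+3 from by omega, show m+1+2*k+1 = m+2*k+2 from by omega,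
          show m+1+2*k = m+2*k+1 from by omega] at h
        have h' : ((m+1+k+1:ℕ):ℝ) * (Nat.choose (m+2*k+3) (k+1) : ℝ)
            = 2*((m+2*k+2:ℕ):ℝ) * (Nat.choose (m+2*k+1) k : ℝ)
              + ((m+1:ℕ):ℝ) * (Nat.choose (m+2*k+2) (k+1) : ℝ) := by exact_mod_cast h
        push_cast at h' ⊢
        linear_combination (rchoose (ℓ + (m:ℝ)) (m+1)) * h' + ((Nat.choose (m+2*k+2) (k+1) : ℝ)) * hrc
      · rw [if_neg hmn]
        have hm : m = n := by omega
        subst hm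
        have c1 : 2*(m+1)-(m+1) = m+1 := by omega
        have c2 : (m+1)-(m+1) = 0 := by omega
        have c3 : 2*m-m = m := by omega
        have c4 : m-m = 0 := by omega
        rw [c1, c2, c3, c4, harg]
        simp only [Nat.choose_zero_right, Nat.cast_one]
        push_cast
        linear_combination hrc

noncomputable def Sf (ℓ : ℝ) (n : ℕ) (y : ℝ) : ℝ :=
  ∑ i ∈ Finset.range (n+1),
    (Nat.choose (2*n-i) (n-i) : ℝ) * rchoose (ℓ+i-1) i
      * Gf y ^ ((1:ℝ)+2*n-i) * Cf y ^ (ℓ+i)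

lemma key (ℓ : ℝ) (n : ℕ) : ∀ x : ℝ, x < 1/4 →
    iteratedDeriv n (fun y : ℝ => (1 - 4 * y) ^ (-(1 / 2) : ℝ)
        * (2 / (1 + Real.sqrt (1 - 4 * y))) ^ ℓ) x
      = (n.factorial : ℝ) * Sf ℓ n x := by
  induction n with
  | zero =>
      intro x hx
      have h0 : Sf ℓ 0 x = Gf x * Cf x ^ ℓ := by
        rw [Sf, Finset.sum_range_one]
        norm_num [rchoose_zero, Real.rpow_one]
      rw [iteratedDeriv_zero, h0]
      simp [Gf, Cf, Nat.factorial]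
  | succ n IH =>
      intro x hx
      rw [iteratedDeriv_succ]
      have hev : iteratedDeriv n (fun y : ℝ => (1 - 4 * y) ^ (-(1 / 2) : ℝ)
          * (2 / (1 + Real.sqrt (1 - 4 * y))) ^ ℓ)
          =ᶠ[nhds x] fun y => (n.factorial : ℝ) * Sf ℓ n y := by
        filter_upwards [Iio_mem_nhds hx] with y hy using IH y hy
      rw [hev.deriv_eq]
      -- derivative of the sum
      set a : ℕ → ℝ := fun i => (Nat.choose (2*n-i) (n-i) : ℝ) * rchoose (ℓ+i-1) i with ha
      have hS : HasDerivAt (fun y => (n.factorial : ℝ) * Sf ℓ n y)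
          ((n.factorial : ℝ) * ∑ i ∈ Finset.range (n+1),
            a i * (2*((1:ℝ)+2*n-i) * Gf x^(((1:ℝ)+2*n-i)+2) * Cf x^(ℓ+i)
              + (ℓ+i) * Gf x^(((1:ℝ)+2*n-i)+1) * Cf x^((ℓ+i)+1))) x := by
        refine HasDerivAt.const_mul _ ?_
        exact HasDerivAt.fun_sum fun i _ => hasDerivAt_term (a i) ((1:ℝ)+2*n-i) (ℓ+i) hx
      rw [hS.deriv]
      -- now the combinatorial rearrangement
      set W : ℕ → ℝ := fun j => Gf x ^ ((1:ℝ)+2*((n+1:ℕ):ℝ)-(j:ℝ)) * Cf x ^ (ℓ+(j:ℝ)) with hW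
      have hsum : (∑ i ∈ Finset.range (n+1),
            a i * (2*((1:ℝ)+2*n-i) * Gf x^(((1:ℝ)+2*n-i)+2) * Cf x^(ℓ+i)
              + (ℓ+i) * Gf x^(((1:ℝ)+2*n-i)+1) * Cf x^((ℓ+i)+1)))
          = ((n:ℝ)+1) * Sf ℓ (n+1) x := by
        have hd : ∀ i ∈ Finset.range (n+1),
            a i * (2*((1:ℝ)+2*n-i) * Gf x^(((1:ℝ)+2*n-i)+2) * Cf x^(ℓ+i)
              + (ℓ+i) * Gf x^(((1:ℝ)+2*n-i)+1) * Cf x^((ℓ+i)+1))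
            = 2*((1:ℝ)+2*n-i) * a i * W i + (ℓ+i) * a i * W (i+1) := by
          intro i _
          rw [hW]
          simp only []
          rw [show ((1:ℝ)+2*n-i)+2 = (1:ℝ)+2*((n+1:ℕ):ℝ)-(i:ℝ) by push_cast; ring,
            show ((1:ℝ)+2*n-i)+1 = (1:ℝ)+2*((n+1:ℕ):ℝ)-((i+1:ℕ):ℝ) by push_cast; ring,
            show (ℓ+(i:ℝ))+1 = ℓ+((i+1:ℕ):ℝ) by push_cast; ring]
          ring
        rw [Finset.sum_congr rfl hd, Finset.sum_add_distrib]
        set P' : ℕ → ℝ := fun j => if j ≤ n then 2*((1:ℝ)+2*n-j) * a j * W j else 0 with hP'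
        set Q' : ℕ → ℝ := fun j => if j = 0 then 0
            else (ℓ+((j-1:ℕ):ℝ)) * a (j-1) * W j with hQ'
        have e1 : (∑ i ∈ Finset.range (n+1), 2*((1:ℝ)+2*n-i) * a i * W i)
            = ∑ j ∈ Finset.range (n+2), P' j := by
          rw [Finset.sum_range_succ P' (n+1)]
          have hz : P' (n+1) = 0 := by rw [hP']; exact if_neg (by omega)
          rw [hz, add_zero]
          refine Finset.sum_congr rfl fun j hj => ?_
          have hjn : j ≤ n := by have := Finset.mem_range.1 hj; omega
          rw [hP']
          exact (if_pos hjn).symm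
        have e2 : (∑ i ∈ Finset.range (n+1), (ℓ+(i:ℝ)) * a i * W (i+1))
            = ∑ j ∈ Finset.range (n+2), Q' j := by
          rw [Finset.sum_range_succ' Q' (n+1)]
          have hz : Q' 0 = 0 := by rw [hQ']; simp
          rw [hz, add_zero]
          refine (Finset.sum_congr rfl fun j _ => ?_).symm
          have hne : Q' (j+1) = (ℓ+((j+1-1:ℕ):ℝ)) * a (j+1-1) * W (j+1) := by
            rw [hQ']; exact if_neg (by omega)
          rw [hne]
          norm_num
        rw [e1, e2, ← Finset.sum_add_distrib, Sf, Finset.mul_sum]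
        refine Finset.sum_congr rfl fun j hj => ?_
        have hj2 : j ≤ n + 1 := by have := Finset.mem_range.1 hj; omega
        have hid := coeff_id ℓ n j hj2
        rw [hP', hQ', ha, hW]
        simp only []
        by_cases h2 : j = 0
        · subst h2
          rw [if_pos (Nat.zero_le n)] at hid ⊢
          rw [if_pos rfl] at hid ⊢
          linear_combination (-(Gf x ^ ((1:ℝ)+2*((n+1:ℕ):ℝ)-((0:ℕ):ℝ)) * Cf x ^ (ℓ+((0:ℕ):ℝ)))) * hid
        · by_cases h1 : j ≤ n
          · rw [if_pos h1] at hid ⊢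
            rw [if_neg h2] at hid ⊢
            linear_combination (-(Gf x ^ ((1:ℝ)+2*((n+1:ℕ):ℝ)-(j:ℝ)) * Cf x ^ (ℓ+(j:ℝ)))) * hid
          · rw [if_neg h1] at hid ⊢
            rw [if_neg h2] at hid ⊢
            linear_combination (-(Gf x ^ ((1:ℝ)+2*((n+1:ℕ):ℝ)-(j:ℝ)) * Cf x ^ (ℓ+(j:ℝ)))) * hid
      rw [hsum, Nat.factorial_succ]
      push_cast
      ring

theorem iteratedDeriv_g_mul_C_pow (ℓ : ℝ) (n : ℕ) (x : ℝ) (hx : x < 1 / 4) :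
    iteratedDeriv n
        (fun y : ℝ => (1 - 4 * y) ^ (-(1 / 2) : ℝ)
          * (2 / (1 + Real.sqrt (1 - 4 * y))) ^ ℓ) x / (Nat.factorial n : ℝ)
      = ∑ i ∈ Finset.range (n + 1),
          (Nat.choose (2 * n - i) (n - i) : ℝ) * rchoose (ℓ + i - 1) i
            * ((1 - 4 * x) ^ (-(1 / 2) : ℝ)) ^ ((1 : ℝ) + 2 * n - i)
            * (2 / (1 + Real.sqrt (1 - 4 * x))) ^ (ℓ + i) := by
  have h := key ℓ n x (by linarith)
  rw [h, mul_div_cancel_left₀ _ (Nat.cast_ne_zero.2 (Nat.factorial_ne_zero n) : (n.factorial:ℝ) ≠ 0)]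
  rfl
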